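/- Consider the RBB process with n bins and m balls where m ≤ n/e². There exists n_0 such that for all n ≥ n_0, every initial load vector, and every round t ≥ 2m, the probability that max_{i∈[n]} x_i^t ≤ 4 · log n / log(n/(e·m)) is at least 1 − n^{−2}. -/

import Mathlib

open MeasureTheory ProbabilityTheory Finset
open scoped ENNReal

/-- The number of non-empty bins of a load vector. -/
def kappa {n : ℕ} (x : Fin n → ℕ) : ℕ := (Finset.univ.filter fun i => 0 < x i).card

/-- One round of the repeated balls-into-bins (RBB) process: one ball is removed from
each non-empty bin and these `kappa x` balls are re-allocated according to the first
`kappa x` of the bin choices `z : Fin n → Fin n`. -/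
def rbbStep {n : ℕ} (x : Fin n → ℕ) (z : Fin n → Fin n) (i : Fin n) : ℕ :=
  x i - (if 0 < x i then 1 else 0)
    + (Finset.univ.filter fun j : Fin n => (j : ℕ) < kappa x ∧ z j = i).card

/-- The RBB load vector trajectory started from the load vector `x0`. -/
def rbb {n : ℕ} (x0 : Fin n → ℕ) (Z : ℕ → Fin n → Fin n) : ℕ → Fin n → ℕ
  | 0 => x0
  | t + 1 => rbbStep (rbb x0 Z t) (Z t)

lemma card_filter_val_lt (n c : ℕ) :
    ((Finset.univ : Finset (Fin n)).filter fun j : Fin n => (j : ℕ) < c).card = min c n := by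
  rw [Finset.card_filter]
  rw [Fin.sum_univ_eq_sum_range (fun k => if k < c then 1 else 0)]
  rw [← Finset.card_filter]
  have h : (Finset.range n).filter (fun k => k < c) = Finset.range (min c n) := by
    ext k; simp; omega
  rw [h, Finset.card_range]

lemma kappa_le_sum {n : ℕ} (x : Fin n → ℕ) : kappa x ≤ ∑ i, x i := by
  have h1 : kappa x • 1 ≤ ∑ i ∈ Finset.univ.filter fun i => 0 < x i, x i := by
    apply Finset.card_nsmul_le_sum
    intro i hi
    have := (Finset.mem_filter.1 hi).2
    omega
  have h2 : ∑ i ∈ Finset.univ.filter (fun i => 0 < x i), x i ≤ ∑ i, x i :=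
    Finset.sum_le_sum_of_subset (Finset.filter_subset _ _)
  simpa using h1.trans h2

lemma kappa_le {n : ℕ} (x : Fin n → ℕ) : kappa x ≤ n := by
  simpa [kappa] using Finset.card_filter_le Finset.univ (fun i => 0 < x i)

lemma sum_rbbStep {n : ℕ} (x : Fin n → ℕ) (z : Fin n → Fin n) :
    ∑ i, rbbStep x z i = ∑ i, x i := by
  unfold rbbStep
  rw [Finset.sum_add_distrib]
  have h1 : ∑ i, (x i - if 0 < x i then 1 else 0) = ∑ i, x i - kappa x := by
    rw [Finset.sum_tsub_distrib]
    · congr 1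
      rw [kappa, Finset.card_filter]
    · intro i _; split <;> omega
  have h2 : ∑ i : Fin n, ((Finset.univ.filter fun j : Fin n => (j : ℕ) < kappa x ∧ z j = i).card) = kappa x := by
    have : ∀ i : Fin n, (Finset.univ.filter fun j : Fin n => (j : ℕ) < kappa x ∧ z j = i).card
        = ∑ j : Fin n, if (j : ℕ) < kappa x ∧ z j = i then 1 else 0 := by
      intro i; rw [Finset.card_filter]
    simp_rw [this]
    rw [Finset.sum_comm]
    have : ∀ j : Fin n, (∑ i : Fin n, if (j : ℕ) < kappa x ∧ z j = i then 1 else 0) = if (j:ℕ) < kappa x then 1 else 0 := by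
      intro j
      by_cases h : (j : ℕ) < kappa x
      · simp [h]
      · simp [h]
    simp_rw [this]
    rw [← Finset.card_filter, card_filter_val_lt, min_eq_left (kappa_le x)]
  rw [h1, h2]
  have := kappa_le_sum x
  omega

lemma sum_rbb {n : ℕ} (x0 : Fin n → ℕ) (Z : ℕ → Fin n → Fin n) (t : ℕ) :
    ∑ i, rbb x0 Z t i = ∑ i, x0 i := by
  induction t with
  | zero => rfl
  | succ t ih => rw [rbb, sum_rbbStep, ih]

/-- hit count of bin `i` at round `u` (actual process). -/
def hits {n : ℕ} (x0 : Fin n → ℕ) (Z : ℕ → Fin n → Fin n) (i : Fin n) (u : ℕ) : ℕ :=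
  (Finset.univ.filter fun j : Fin n => (j : ℕ) < kappa (rbb x0 Z u) ∧ Z u j = i).card

lemma rbb_succ {n : ℕ} (x0 : Fin n → ℕ) (Z : ℕ → Fin n → Fin n) (i : Fin n) (u : ℕ) :
    rbb x0 Z (u+1) i = rbb x0 Z u i - (if 0 < rbb x0 Z u i then 1 else 0) + hits x0 Z i u := rfl

lemma rbb_telescope {n : ℕ} (x0 : Fin n → ℕ) (Z : ℕ → Fin n → Fin n) (i : Fin n)
    (s : ℕ) : ∀ t, s ≤ t →
    rbb x0 Z t i + ((Finset.Ico s t).filter fun u => 0 < rbb x0 Z u i).card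
      = rbb x0 Z s i + ∑ u ∈ Finset.Ico s t, hits x0 Z i u := by
  intro t
  induction t with
  | zero => intro h; simp [Nat.le_zero.1 h]
  | succ t ih =>
    intro h
    rcases Nat.lt_or_ge s (t+1) with h' | h'
    · have hst : s ≤ t := by omega
      have ht : t ∉ Finset.Ico s t := by simp
      rw [Finset.sum_Ico_succ_top hst]
      have hcard : ((Finset.Ico s (t+1)).filter fun u => 0 < rbb x0 Z u i).card
          = ((Finset.Ico s t).filter fun u => 0 < rbb x0 Z u i).card
            + (if 0 < rbb x0 Z t i then 1 else 0) := by
        rw [show Finset.Ico s (t+1) = insert t (Finset.Ico s t) by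
          ext u; simp; omega]
        rw [Finset.filter_insert]
        split
        · rw [Finset.card_insert_of_notMem (by simp)]
        · simp
      rw [hcard, rbb_succ]
      have := ih hst
      have hle : (if 0 < rbb x0 Z t i then 1 else 0) ≤ rbb x0 Z t i := by split <;> omega
      omega
    · have : s = t + 1 := by omega
      subst this; simp

/-- Deterministic bound: window conditions imply small load. -/
lemma det_bound {n : ℕ} (x0 : Fin n → ℕ) (Z : ℕ → Fin n → Fin n) (m t K : ℕ)
    (hsum : ∑ i, x0 i = m) (i : Fin n)
    (H1 : ∀ s, s < t → (∑ u ∈ Finset.Ico s t, hits x0 Z i u) < (t - s) + K)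
    (H2 : x0 i + ∑ u ∈ Finset.Ico 0 t, hits x0 Z i u ≤ t + K) :
    rbb x0 Z t i ≤ K := by
  by_cases hex : ∃ s, s ≤ t ∧ rbb x0 Z s i = 0
  · -- take largest s ≤ t with x_s = 0
    set s := Nat.findGreatest (fun s => rbb x0 Z s i = 0) t with hs
    obtain ⟨s0, hs0t, hs00⟩ := hex
    have hzero : rbb x0 Z s i = 0 :=
      Nat.findGreatest_spec (P := fun s => rbb x0 Z s i = 0) hs0t hs00
    have hst : s ≤ t := Nat.findGreatest_le t
    rcases Nat.lt_or_ge s t with hlt | hge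
    · have hpos : ∀ u, s < u → u ≤ t → 0 < rbb x0 Z u i := by
        intro u hsu hut
        rcases Nat.eq_zero_or_pos (rbb x0 Z u i) with h0 | h0
        · exfalso
          have := Nat.le_findGreatest (P := fun s => rbb x0 Z s i = 0) hut h0
          omega
        · exact h0
      have hcard : ((Finset.Ico s t).filter fun u => 0 < rbb x0 Z u i).card = t - s - 1 := by
        have : (Finset.Ico s t).filter (fun u => 0 < rbb x0 Z u i) = Finset.Ico (s+1) t := by
          ext u
          simp only [Finset.mem_filter, Finset.mem_Ico]
          constructor
          · rintro ⟨⟨h1, h2⟩, h3⟩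
            refine ⟨?_, h2⟩
            rcases Nat.lt_or_ge s u with h | h
            · omega
            · have : u = s := by omega
              rw [this] at h3; omega
          · rintro ⟨h1, h2⟩
            exact ⟨⟨by omega, h2⟩, hpos u (by omega) (by omega)⟩
        rw [this, Nat.card_Ico]
        omega
      have htel := rbb_telescope x0 Z i s t hst
      rw [hcard, hzero] at htel
      have := H1 s hlt
      omega
    · have : s = t := by omega
      rw [← this, hzero]; omega
  · push_neg at hex
    have hpos : ∀ u, u ≤ t → 0 < rbb x0 Z u i := by
      intro u hu; have := hex u hu; omega
    have hcard : ((Finset.Ico 0 t).filter fun u => 0 < rbb x0 Z u i).card = t := by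
      rw [Finset.filter_true_of_mem (fun u hu => by
        simp only [Finset.mem_Ico] at hu
        exact hpos u (by omega)), Nat.card_Ico]
      omega
    have htel := rbb_telescope x0 Z i 0 t (by omega)
    rw [hcard] at htel
    have : rbb x0 Z 0 i = x0 i := rfl
    rw [this] at htel
    omega

/-- dominate actual hits by the `m`-ball count. -/
lemma hits_le {n : ℕ} (x0 : Fin n → ℕ) (Z : ℕ → Fin n → Fin n) (m : ℕ)
    (hsum : ∑ i, x0 i = m) (i : Fin n) (u : ℕ) :
    hits x0 Z i u ≤ (Finset.univ.filter fun j : Fin n => (j : ℕ) < m ∧ Z u j = i).card := by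
  apply Finset.card_le_card
  intro j hj
  simp only [Finset.mem_filter] at *
  refine ⟨hj.1, ?_, hj.2.2⟩
  have h1 : kappa (rbb x0 Z u) ≤ m := by
    have := kappa_le_sum (rbb x0 Z u)
    rw [sum_rbb, hsum] at this
    exact this
  omega

section Prob
variable {n m : ℕ} {Ω : Type} [MeasurableSpace Ω] (P : Measure Ω) [IsProbabilityMeasure P]
  (Z : ℕ → Fin n → Ω → Fin n)

/-- counting function -/
def cnt (m : ℕ) (Z : ℕ → Fin n → Ω → Fin n) (i : Fin n) (u : ℕ) (ω : Ω) : ℕ :=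
  (Finset.univ.filter fun j : Fin n => (j : ℕ) < m ∧ Z u j ω = i).card

lemma measurable_cnt (hmeas : ∀ t j, Measurable (Z t j)) (i : Fin n) (u : ℕ) :
    Measurable (cnt m Z i u) := by
  unfold cnt
  simp_rw [Finset.card_filter]
  apply Finset.measurable_sum
  intro j _
  by_cases hj : (j : ℕ) < m
  · simp only [hj, true_and]
    have : MeasurableSet {ω : Ω | Z u j ω = i} := by
      have := (hmeas u j) (MeasurableSet.singleton i)
      simpa [Set.preimage] using this
    exact Measurable.ite this measurable_const measurable_const
  · simp [hj]

lemma measurable_tailset (hmeas : ∀ t j, Measurable (Z t j)) (i : Fin n) (s t k : ℕ) :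
    MeasurableSet {ω : Ω | k ≤ ∑ u ∈ Finset.Ico s t, cnt m Z i u ω} := by
  have hm : Measurable fun ω => ∑ u ∈ Finset.Ico s t, cnt m Z i u ω :=
    Finset.measurable_sum _ (fun u _ => measurable_cnt Z hmeas i u)
  exact hm (MeasurableSet.of_discrete (s := {x : ℕ | k ≤ x}))

lemma tail_bound (hmeas : ∀ t j, Measurable (Z t j))
    (hind : iIndepFun (fun (p : ℕ × Fin n) ω => Z p.1 p.2 ω) P)
    (hunif : ∀ t j i, P {ω | Z t j ω = i} = (n : ℝ≥0∞)⁻¹)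
    (hmn : m ≤ n) (i : Fin n) (s t k : ℕ) :
    P {ω | k ≤ ∑ u ∈ Finset.Ico s t, cnt m Z i u ω}
      ≤ (((t - s) * m).choose k) * ((n : ℝ≥0∞)⁻¹) ^ k := by
  set T : Finset (ℕ × Fin n) :=
    (Finset.Ico s t) ×ˢ (Finset.univ.filter fun j : Fin n => (j : ℕ) < m) with hT
  have hTcard : T.card = (t - s) * m := by
    rw [hT, Finset.card_product, Nat.card_Ico, card_filter_val_lt, min_eq_left hmn]
  have hsum : ∀ ω, ∑ u ∈ Finset.Ico s t, cnt m Z i u ω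
      = (T.filter fun p => Z p.1 p.2 ω = i).card := by
    intro ω
    rw [Finset.card_filter, hT, Finset.sum_product]
    unfold cnt
    congr 1
    ext u
    rw [Finset.card_filter, Finset.sum_filter]
    congr 1
    ext j
    by_cases hj : (j : ℕ) < m <;> simp [hj]
  have hsub : {ω | k ≤ ∑ u ∈ Finset.Ico s t, cnt m Z i u ω}
      ⊆ ⋃ S ∈ T.powersetCard k, ⋂ p ∈ S, {ω | Z p.1 p.2 ω = i} := by
    intro ω hω
    simp only [Set.mem_setOf_eq, hsum ω] at hω
    obtain ⟨S, hS, hScard⟩ := Finset.exists_subset_card_eq hω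
    refine Set.mem_iUnion.2 ⟨S, Set.mem_iUnion.2 ⟨?_, ?_⟩⟩
    · exact Finset.mem_powersetCard.2 ⟨hS.trans (Finset.filter_subset _ _), hScard⟩
    · refine Set.mem_iInter.2 fun p => Set.mem_iInter.2 fun hp => ?_
      have := hS hp
      simp only [Finset.mem_filter] at this
      exact this.2
  calc P {ω | k ≤ ∑ u ∈ Finset.Ico s t, cnt m Z i u ω}
      ≤ P (⋃ S ∈ T.powersetCard k, ⋂ p ∈ S, {ω | Z p.1 p.2 ω = i}) := measure_mono hsub
    _ ≤ ∑ S ∈ T.powersetCard k, P (⋂ p ∈ S, {ω | Z p.1 p.2 ω = i}) :=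
        measure_biUnion_finset_le _ _
    _ = ∑ S ∈ T.powersetCard k, ((n : ℝ≥0∞)⁻¹) ^ k := by
        apply Finset.sum_congr rfl
        intro S hS
        have hScard : S.card = k := (Finset.mem_powersetCard.1 hS).2
        have := hind.meas_biInter (S := S) (s := fun p => {ω | Z p.1 p.2 ω = i})
          (fun p _ => ⟨{i}, MeasurableSet.singleton i, by ext ω; simp⟩)
        rw [this]
        rw [Finset.prod_congr rfl (fun p _ => hunif p.1 p.2 i)]
        rw [Finset.prod_const, hScard]
    _ = (((t - s) * m).choose k) * ((n : ℝ≥0∞)⁻¹) ^ k := by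
        rw [Finset.sum_const, Finset.card_powersetCard, hTcard, nsmul_eq_mul]
end Prob

section RealEst
open Real

/-- `1/k! ≤ (e/k)^k` -/
lemma inv_factorial_le (k : ℕ) (hk : 1 ≤ k) :
    ((k.factorial : ℝ))⁻¹ ≤ (Real.exp 1 / k) ^ k := by
  have hkpos : (0:ℝ) < k := by positivity
  have h1 : ((k:ℝ)) ^ k / k.factorial ≤ Real.exp k := by
    have h2 := Real.sum_le_exp_of_nonneg (x := (k:ℝ)) (by positivity) (k+1)
    refine le_trans ?_ h2
    exact Finset.single_le_sum (f := fun i => (k:ℝ)^i / i.factorial)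
      (fun i _ => by positivity) (Finset.self_mem_range_succ k)
  have hfac : (0:ℝ) < k.factorial := by positivity
  have h1' : ((k:ℝ)) ^ k / k.factorial ≤ Real.exp 1 ^ k := by
    rw [Real.exp_one_pow]; exact h1
  rw [div_pow, le_div_iff₀ (by positivity)]
  rw [inv_mul_eq_div]
  exact h1'

/-- real Chernoff-type bound -/
lemma choose_mul_le (N k : ℕ) (hk : 1 ≤ k) (x : ℝ) (hx : 0 < x) :
    (N.choose k : ℝ) * (x⁻¹) ^ k ≤ (Real.exp 1 * N / (k * x)) ^ k := by
  have h1 : (N.choose k : ℝ) ≤ (N:ℝ) ^ k / k.factorial := by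
    have := Nat.choose_le_pow_div (α := ℝ) k N
    simpa using this
  have hkpos : (0:ℝ) < k := by positivity
  have h2 : (N:ℝ) ^ k / k.factorial ≤ (N:ℝ)^k * (Real.exp 1 / k)^k := by
    rw [div_eq_mul_inv]
    exact mul_le_mul_of_nonneg_left (inv_factorial_le k hk) (by positivity)
  calc (N.choose k : ℝ) * (x⁻¹) ^ k ≤ ((N:ℝ)^k * (Real.exp 1 / k)^k) * (x⁻¹)^k := by
        apply mul_le_mul_of_nonneg_right (h1.trans h2) (by positivity)
    _ = (Real.exp 1 * N / (k * x)) ^ k := by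
        rw [← mul_pow, ← mul_pow]
        congr 1
        field_simp

variable {a : ℝ} (ha0 : 0 < a) (ha : a ≤ (Real.exp 1)⁻¹)

include ha0 ha in
/-- sliding-window estimate -/
lemma window_est (n m w K : ℕ) (hn : 0 < (n:ℝ)) (hw : 1 ≤ w)
    (haeq : a = Real.exp 1 * m / n) :
    (((w * m).choose (w + K) : ℝ)) * (((n:ℝ))⁻¹) ^ (w + K) ≤ a ^ w * a ^ K := by
  have hk : 1 ≤ w + K := by omega
  refine (choose_mul_le (w*m) (w+K) hk n hn).trans ?_
  rw [← pow_add]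
  apply pow_le_pow_left₀ (by positivity)
  rw [haeq]
  rw [div_le_div_iff₀ (by positivity) hn]
  push_cast
  have h1 : (0:ℝ) ≤ Real.exp 1 * m * n * K := by positivity
  nlinarith [h1]

include ha0 ha in
/-- full-window estimate; `p = t - m`, `m ≤ p`. -/
lemma full_est (n m p K : ℕ) (hn : 0 < (n:ℝ)) (hmp : m ≤ p)
    (haeq : a = Real.exp 1 * m / n) :
    ((((p + m) * m).choose (p + K + 1) : ℝ)) * (((n:ℝ))⁻¹) ^ (p + K + 1) ≤ a ^ K * a := by
  have hk : 1 ≤ p + K + 1 := by omega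
  refine (choose_mul_le ((p+m)*m) (p+K+1) hk n hn).trans ?_
  have hkR : (0:ℝ) < (p + K + 1 : ℕ) := by positivity
  have hrew : (Real.exp 1 * (((p+m)*m : ℕ) : ℝ) / ((((p+K+1) : ℕ) : ℝ) * (n:ℝ)))
      = a * (((p+m : ℕ):ℝ) / ((p+K+1 : ℕ):ℝ)) := by
    rw [haeq]; push_cast; field_simp
  rw [hrew, mul_pow]
  have hratio : ((((p+m):ℕ):ℝ) / (((p+K+1):ℕ):ℝ)) ^ (p+K+1)
      ≤ Real.exp ((p+m:ℝ) - (p+K+1:ℝ)) := by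
    have h1 : (((p+m):ℕ):ℝ) / (((p+K+1):ℕ):ℝ)
        = 1 + ((p+m:ℝ) - (p+K+1:ℝ)) / ((p+K+1:ℕ):ℝ) := by push_cast; field_simp; ring
    rw [h1]
    have h2 : 1 + ((p+m:ℝ) - (p+K+1:ℝ)) / ((p+K+1:ℕ):ℝ)
        ≤ Real.exp (((p+m:ℝ) - (p+K+1:ℝ)) / ((p+K+1:ℕ):ℝ)) := by
      rw [add_comm]; exact Real.add_one_le_exp _
    have h3 : (0:ℝ) ≤ 1 + ((p+m:ℝ) - (p+K+1:ℝ)) / ((p+K+1:ℕ):ℝ) := by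
      rw [← h1]; positivity
    calc (1 + ((p+m:ℝ) - (p+K+1:ℝ)) / ((p+K+1:ℕ):ℝ)) ^ (p+K+1)
        ≤ Real.exp (((p+m:ℝ) - (p+K+1:ℝ)) / ((p+K+1:ℕ):ℝ)) ^ (p+K+1) :=
          pow_le_pow_left₀ h3 h2 _
      _ = Real.exp ((p+K+1:ℕ) * (((p+m:ℝ) - (p+K+1:ℝ)) / ((p+K+1:ℕ):ℝ))) := by
          rw [Real.exp_nat_mul]
      _ = Real.exp ((p+m:ℝ) - (p+K+1:ℝ)) := by
          congr 1; field_simp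
  calc a ^ (p+K+1) * ((((p+m):ℕ):ℝ) / (((p+K+1):ℕ):ℝ)) ^ (p+K+1)
      ≤ a ^ (p+K+1) * Real.exp ((p+m:ℝ) - (p+K+1:ℝ)) :=
        mul_le_mul_of_nonneg_left hratio (by positivity)
    _ ≤ a ^ K * a := by
        have hap : a ^ p ≤ Real.exp (-(p:ℝ)) := by
          calc a ^ p ≤ ((Real.exp 1)⁻¹) ^ p := pow_le_pow_left₀ ha0.le ha p
            _ = Real.exp (-1) ^ p := by rw [Real.exp_neg]
            _ = Real.exp (-(p:ℝ)) := by rw [← Real.exp_nat_mul]; norm_num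
        have hsplit : a ^ (p+K+1) = a ^ (K+1) * a ^ p := by
          rw [← pow_add]; congr 1; ring
        have hexp2 : Real.exp (-(p:ℝ)) * Real.exp ((p+m:ℝ) - (p+K+1:ℝ)) ≤ 1 := by
          rw [← Real.exp_add, Real.exp_le_one_iff]
          have : (m:ℝ) ≤ p := by exact_mod_cast Nat.cast_le.2 hmp
          push_cast
          linarith [Nat.cast_nonneg (α := ℝ) K]
        calc a ^ (p+K+1) * Real.exp ((p+m:ℝ) - (p+K+1:ℝ))
            = a ^ (K+1) * (a ^ p * Real.exp ((p+m:ℝ) - (p+K+1:ℝ))) := by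
              rw [hsplit]; ring
          _ ≤ a ^ (K+1) * (Real.exp (-(p:ℝ)) * Real.exp ((p+m:ℝ) - (p+K+1:ℝ))) := by
              apply mul_le_mul_of_nonneg_left _ (by positivity)
              exact mul_le_mul_of_nonneg_right hap (Real.exp_pos _).le
          _ ≤ a ^ (K+1) * 1 := mul_le_mul_of_nonneg_left hexp2 (by positivity)
          _ = a ^ K * a := by rw [mul_one, pow_succ]
end RealEst

lemma geom_est {a : ℝ} (ha0 : 0 < a) (ha : a ≤ 2⁻¹) (t : ℕ) :
    ∑ s ∈ Finset.range t, a ^ (t - s) ≤ 1 := by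
  have h1 : ∑ s ∈ Finset.range t, a ^ (t - s) = ∑ w ∈ Finset.range t, a ^ (w + 1) := by
    rw [← Finset.sum_range_reflect]
    apply Finset.sum_congr rfl
    intro s hs
    simp only [Finset.mem_range] at hs
    congr 1
    omega
  have hgeom : ∑ w ∈ Finset.range t, a ^ w ≤ 2 := by
    have h2 : (∑ w ∈ Finset.range t, a ^ w) * (a - 1) = a ^ t - 1 := geom_sum_mul a t
    have h4 : (0:ℝ) ≤ a ^ t := by positivity
    nlinarith
  have h5 : ∑ w ∈ Finset.range t, a ^ (w + 1) = a * ∑ w ∈ Finset.range t, a ^ w := by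
    rw [Finset.mul_sum]
    apply Finset.sum_congr rfl
    intro w _
    ring
  rw [h1, h5]
  calc a * ∑ w ∈ Finset.range t, a ^ w ≤ a * 2 := by
        apply mul_le_mul_of_nonneg_left hgeom ha0.le
    _ ≤ 1 := by linarith

lemma ofReal_choose_pow (c k nn : ℕ) (hn : 0 < nn) :
    ((c.choose k : ℝ≥0∞)) * ((nn : ℝ≥0∞)⁻¹) ^ k
      = ENNReal.ofReal ((c.choose k : ℝ) * (((nn:ℝ))⁻¹) ^ k) := by
  have hnR : (0:ℝ) < nn := by exact_mod_cast hn
  rw [ENNReal.ofReal_mul (by positivity), ENNReal.ofReal_pow (by positivity),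
    ENNReal.ofReal_inv_of_pos hnR, ENNReal.ofReal_natCast, ENNReal.ofReal_natCast]


set_option maxHeartbeats 2000000

/-- **Lemma 4.2 (lightly loaded case).** For the RBB process with `m ≤ n/e²` balls,
there is `n₀` such that for all `n ≥ n₀`, every initial load vector and every round
`t ≥ 2m`, with probability at least `1 - n⁻²` the maximum load at round `t` is at most
`4·log n / log (n/(e·m))`. -/
theorem rbb_lightly_loaded_max_load :
    ∃ n0 : ℕ, ∀ n : ℕ, n0 ≤ n → ∀ m : ℕ, 1 ≤ m → (m : ℝ) ≤ (n : ℝ) / Real.exp 2 →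
    ∀ (Ω : Type) [inst : MeasurableSpace Ω] (P : Measure Ω) [IsProbabilityMeasure P]
      (Z : ℕ → Fin n → Ω → Fin n),
      (∀ t j, Measurable (Z t j)) →
      iIndepFun (fun (p : ℕ × Fin n) ω => Z p.1 p.2 ω) P →
      (∀ t j i, P {ω | Z t j ω = i} = (n : ℝ≥0∞)⁻¹) →
    ∀ x0 : Fin n → ℕ, (∑ i, x0 i) = m →
    ∀ t : ℕ, 2 * m ≤ t →
      P {ω | ∀ i : Fin n,
            (rbb x0 (fun u j => Z u j ω) t i : ℝ)
              ≤ 4 * Real.log n / Real.log ((n : ℝ) / (Real.exp 1 * m))}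
        ≥ ENNReal.ofReal (1 - 1 / (n : ℝ) ^ 2) := by
  use 1
  intro n hn0 m hm hm2 Ω inst P instP Z hmeas hind hunif x0 hsum t ht
  -- ======= real-number setup =======
  have hmR : (1:ℝ) ≤ (m:ℝ) := by exact_mod_cast hm
  have he2 : (0:ℝ) < Real.exp 2 := Real.exp_pos 2
  have hme2 : (m:ℝ) * Real.exp 2 ≤ (n:ℝ) := (le_div_iff₀ he2).1 hm2
  have he2e : Real.exp 2 = Real.exp 1 * Real.exp 1 := by
    rw [← Real.exp_add]; norm_num
  have he1 : (0:ℝ) < Real.exp 1 := Real.exp_pos 1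
  have he1ge : (2:ℝ) ≤ Real.exp 1 := by
    have := Real.add_one_le_exp (1:ℝ); linarith
  have hnR : (0:ℝ) < (n:ℝ) := by nlinarith
  have hnpos : 0 < n := by exact_mod_cast hnR
  have he2ge : (4:ℝ) ≤ Real.exp 2 := by rw [he2e]; nlinarith
  have hmn : m ≤ n := by
    have : (m:ℝ) ≤ (n:ℝ) := by nlinarith
    exact_mod_cast this
  set b : ℝ := (n:ℝ) / (Real.exp 1 * m) with hbdef
  set L : ℝ := 4 * Real.log n / Real.log ((n : ℝ) / (Real.exp 1 * m)) with hLdef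
  set a : ℝ := Real.exp 1 * m / n with hadef
  have hbpos : (0:ℝ) < b := by rw [hbdef]; positivity
  have ha0 : (0:ℝ) < a := by rw [hadef]; positivity
  have hab : a = b⁻¹ := by rw [hadef, hbdef, inv_div]
  have hae : a ≤ (Real.exp 1)⁻¹ := by
    rw [hadef, div_le_iff₀ hnR]
    have hinv : (Real.exp 1)⁻¹ * Real.exp 1 = 1 := inv_mul_cancel₀ he1.ne'
    nlinarith [hme2, he1, hinv]
  have hb_ge : Real.exp 1 ≤ b := by
    rw [hbdef, le_div_iff₀ (by positivity)]
    calc Real.exp 1 * (Real.exp 1 * m) = m * Real.exp 2 := by rw [he2e]; ring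
      _ ≤ n := hme2
  have hlogb : 1 ≤ Real.log b := by
    calc (1:ℝ) = Real.log (Real.exp 1) := (Real.log_exp 1).symm
      _ ≤ Real.log b := Real.log_le_log (Real.exp_pos 1) hb_ge
  have hn1 : (1:ℝ) ≤ (n:ℝ) := by exact_mod_cast hnpos
  have hlogn : 0 ≤ Real.log n := Real.log_nonneg hn1
  have hL0 : 0 ≤ L := by rw [hLdef, ← hbdef]; positivity
  set K : ℕ := ⌊L⌋₊ with hKdef
  have hKL : (K:ℝ) ≤ L := Nat.floor_le hL0
  have hLK : L < (K:ℝ) + 1 := Nat.lt_floor_add_one L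
  have hbK : (n:ℝ) ^ (4:ℕ) ≤ b ^ (K+1) := by
    have h1 : b ^ (K+1) = Real.exp (((K+1:ℕ):ℝ) * Real.log b) := by
      rw [Real.exp_nat_mul, Real.exp_log hbpos]
    have h2 : (n:ℝ) ^ (4:ℕ) = Real.exp (((4:ℕ):ℝ) * Real.log n) := by
      rw [Real.exp_nat_mul, Real.exp_log hnR]
    rw [h1, h2]
    apply Real.exp_le_exp.2
    have hlbne : Real.log b ≠ 0 := by linarith
    have hLb : L * Real.log b = 4 * Real.log n := by
      rw [hLdef, ← hbdef]; field_simp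
    push_cast
    nlinarith
  have haK : a ^ K ≤ b / (n:ℝ) ^ (4:ℕ) := by
    rw [hab, inv_pow]
    have h1 : (b ^ K)⁻¹ = b / b ^ (K+1) := by
      rw [pow_succ]; field_simp
    rw [h1]
    exact div_le_div_of_nonneg_left hbpos.le (by positivity) hbK
  have hfinal : (n:ℝ) * (a ^ K * (1 + a)) ≤ 1 / (n:ℝ) ^ 2 := by
    have h1 : (1:ℝ) + a ≤ 2 := by
      have : a ≤ 1 := le_trans hae (by rw [inv_le_one_iff₀]; right; linarith)
      linarith
    have h2 : (n:ℝ) * (a ^ K * (1 + a)) ≤ (n:ℝ) * ((b / (n:ℝ)^(4:ℕ)) * 2) := by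
      apply mul_le_mul_of_nonneg_left _ hnR.le
      apply mul_le_mul haK h1 (by positivity) (by positivity)
    refine h2.trans ?_
    rw [hbdef]
    have hem : (2:ℝ) ≤ Real.exp 1 * (m:ℝ) := by nlinarith
    have keygen : ∀ x E : ℝ, 0 < x → 0 < E → x * (x/E/x^(4:ℕ)*2) = 2/(E*x^2) := by
      intro x E hx hE
      field_simp
    have key : (n:ℝ) * ((n:ℝ)/(Real.exp 1 * m) / (n:ℝ)^(4:ℕ) * 2)
        = 2/((Real.exp 1 * m) * (n:ℝ)^2) := keygen _ _ hnR (by positivity)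
    rw [key, div_le_div_iff₀ (by positivity) (by positivity)]
    nlinarith [sq_nonneg ((n:ℝ)), hnR]
  -- ======= events =======
  classical
  set As : Fin n → ℕ → Set Ω :=
    fun i s => {ω | (t - s) + K ≤ ∑ u ∈ Finset.Ico s t, cnt m Z i u ω} with hAs
  set Fs : Fin n → Set Ω :=
    fun i => {ω | t - m + K + 1 ≤ ∑ u ∈ Finset.Ico 0 t, cnt m Z i u ω} with hFs
  set Bad : Set Ω := ⋃ i : Fin n, ((⋃ s ∈ Finset.range t, As i s) ∪ Fs i) with hBad
  have hAmeas : ∀ i s, MeasurableSet (As i s) := fun i s => measurable_tailset Z hmeas i s t _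
  have hFmeas : ∀ i, MeasurableSet (Fs i) := fun i => measurable_tailset Z hmeas i 0 t _
  have hBadmeas : MeasurableSet Bad := by
    apply MeasurableSet.iUnion
    intro i
    exact (MeasurableSet.biUnion (Finset.range t).countable_toSet
      (fun s _ => hAmeas i s)).union (hFmeas i)
  -- ======= inclusion =======
  have hincl : Badᶜ ⊆ {ω | ∀ i : Fin n, (rbb x0 (fun u j => Z u j ω) t i : ℝ) ≤ L} := by
    intro ω hω i
    have hnotin : ω ∉ Bad := hω
    have hdet : rbb x0 (fun u j => Z u j ω) t i ≤ K := by
      apply det_bound x0 _ m t K hsum i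
      · intro s hst
        have h1 : ω ∉ As i s := by
          intro hc
          exact hnotin (Set.mem_iUnion.2
            ⟨i, Or.inl (Set.mem_biUnion (Finset.mem_coe.2 (Finset.mem_range.2 hst)) hc)⟩)
        have h2 : ∑ u ∈ Finset.Ico s t, cnt m Z i u ω < (t - s) + K := by
          by_contra hcon
          exact h1 (by simpa [hAs] using not_lt.1 hcon)
        calc ∑ u ∈ Finset.Ico s t, hits x0 (fun u j => Z u j ω) i u
            ≤ ∑ u ∈ Finset.Ico s t, cnt m Z i u ω :=
              Finset.sum_le_sum fun u _ => hits_le x0 _ m hsum i u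
          _ < (t - s) + K := h2
      · have h1 : ω ∉ Fs i := by
          intro hc
          exact hnotin (Set.mem_iUnion.2 ⟨i, Or.inr hc⟩)
        have h2 : ∑ u ∈ Finset.Ico 0 t, cnt m Z i u ω < t - m + K + 1 := by
          by_contra hcon
          exact h1 (by simpa [hFs] using not_lt.1 hcon)
        have hx0 : x0 i ≤ m := by
          rw [← hsum]
          exact Finset.single_le_sum (f := x0) (fun _ _ => Nat.zero_le _) (Finset.mem_univ i)
        have h3 : ∑ u ∈ Finset.Ico 0 t, hits x0 (fun u j => Z u j ω) i u
            ≤ ∑ u ∈ Finset.Ico 0 t, cnt m Z i u ω :=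
          Finset.sum_le_sum fun u _ => hits_le x0 _ m hsum i u
        omega
    calc (rbb x0 (fun u j => Z u j ω) t i : ℝ) ≤ (K:ℝ) := by exact_mod_cast hdet
      _ ≤ L := hKL
  -- ======= measure bound =======
  have ha2 : a ≤ 2⁻¹ := hae.trans (by
    rw [inv_le_inv₀ he1 (by norm_num)]
    exact he1ge)
  have hPA : ∀ i : Fin n, ∀ s ∈ Finset.range t,
      P (As i s) ≤ ENNReal.ofReal (a ^ (t - s) * a ^ K) := by
    intro i s hs
    have hst : s < t := Finset.mem_range.1 hs
    have hw : 1 ≤ t - s := by omega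
    refine le_trans (tail_bound P Z hmeas hind hunif hmn i s t ((t - s) + K)) ?_
    rw [ofReal_choose_pow _ _ _ hnpos]
    exact ENNReal.ofReal_le_ofReal
      (window_est ha0 hae n m (t - s) K hnR hw hadef)
  have hPF : ∀ i : Fin n, P (Fs i) ≤ ENNReal.ofReal (a ^ K * a) := by
    intro i
    refine le_trans (tail_bound P Z hmeas hind hunif hmn i 0 t (t - m + K + 1)) ?_
    rw [ofReal_choose_pow _ _ _ hnpos]
    apply ENNReal.ofReal_le_ofReal
    have hp : (t - 0) = (t - m) + m := by omega
    have hp2 : t - m + K + 1 = (t - m) + K + 1 := rfl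
    rw [hp, hp2]
    exact full_est ha0 hae n m (t - m) K hnR (by omega) hadef
  have hper : ∀ i : Fin n, P ((⋃ s ∈ Finset.range t, As i s) ∪ Fs i)
      ≤ ENNReal.ofReal (a ^ K * (1 + a)) := by
    intro i
    refine le_trans (measure_union_le _ _) ?_
    have h1 : P (⋃ s ∈ Finset.range t, As i s) ≤ ENNReal.ofReal (a ^ K) := by
      refine le_trans (measure_biUnion_finset_le _ _) ?_
      refine le_trans (Finset.sum_le_sum (hPA i)) ?_
      rw [← ENNReal.ofReal_sum_of_nonneg (fun s _ => by positivity)]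
      apply ENNReal.ofReal_le_ofReal
      have hsum1 : ∑ s ∈ Finset.range t, a ^ (t - s) * a ^ K
          = (∑ s ∈ Finset.range t, a ^ (t - s)) * a ^ K := by
        rw [Finset.sum_mul]
      rw [hsum1]
      calc (∑ s ∈ Finset.range t, a ^ (t - s)) * a ^ K ≤ 1 * a ^ K := by
            apply mul_le_mul_of_nonneg_right (geom_est ha0 ha2 t) (by positivity)
        _ = a ^ K := one_mul _
    refine le_trans (add_le_add h1 (hPF i)) ?_
    rw [← ENNReal.ofReal_add (by positivity) (by positivity)]
    apply ENNReal.ofReal_le_ofReal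
    nlinarith [pow_pos ha0 K]
  have hPBad : P Bad ≤ ENNReal.ofReal (1 / (n:ℝ) ^ 2) := by
    refine le_trans (measure_iUnion_le _) ?_
    rw [tsum_fintype]
    refine le_trans (Finset.sum_le_sum (fun i _ => hper i)) ?_
    rw [Finset.sum_const, Finset.card_univ, Fintype.card_fin, nsmul_eq_mul,
      ← ENNReal.ofReal_natCast n, ← ENNReal.ofReal_mul (by positivity)]
    exact ENNReal.ofReal_le_ofReal hfinal
  -- ======= conclusion =======
  have hx0' : (0:ℝ) ≤ 1 / (n:ℝ) ^ 2 := by positivity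
  have hx1 : 1 / (n:ℝ) ^ 2 ≤ 1 := by
    rw [div_le_one (by positivity)]
    nlinarith
  have hofr : ENNReal.ofReal (1 - 1 / (n:ℝ) ^ 2) = 1 - ENNReal.ofReal (1 / (n:ℝ) ^ 2) := by
    apply ENNReal.eq_sub_of_add_eq ENNReal.ofReal_ne_top
    rw [← ENNReal.ofReal_add (by linarith) hx0']
    norm_num
  calc ENNReal.ofReal (1 - 1 / (n:ℝ) ^ 2) = 1 - ENNReal.ofReal (1 / (n:ℝ) ^ 2) := hofr
    _ ≤ 1 - P Bad := tsub_le_tsub_left hPBad 1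
    _ = P Badᶜ := (prob_compl_eq_one_sub hBadmeas).symm
    _ ≤ P {ω | ∀ i : Fin n, (rbb x0 (fun u j => Z u j ω) t i : ℝ) ≤ L} := measure_mono hincl
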